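/- arXiv:1606.07894 — 2 statements merged into one kernel-verified Lean document; each statement's English description precedes it below -/
import Mathlib

section
/- Let (V,h) be a real nondegenerate quadratic space of even dimension with ν² = σ ∈ {±1}. There exists a unital ℝ-algebra isomorphism φ₀ : Cl(V,h) → Cl(V,-σh) determined by v ↦ ν v on V, and the induced group isomorphism φ : G(V,h) → G(V,-σh) between the Clifford groups satisfies Ad₀ ∘ φ = twisted-Ad₀, i.e. φ intertwines the twisted vector representation of G(V,h) with the untwisted vector representation of G(V,-σh). -/
open CliffordAlgebra

section Helpers

variable {A : Type*} [Ring A] [Algebra ℝ A] {κ : Type*} [DecidableEq κ]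

lemma myPowAnticomm (c x : A) (h : x * c = -(c * x)) :
    ∀ n : ℕ, x * c ^ n = ((-1 : ℝ) ^ n) • (c ^ n * x) := by
  intro n
  induction n with
  | zero => simp
  | succ n ih =>
    rw [pow_succ, ← mul_assoc, ih, smul_mul_assoc, mul_assoc, h, pow_succ]
    simp [mul_neg, mul_neg_one, neg_smul, mul_assoc]

lemma mySwap (g : κ → A)
    (hg : ∀ i j, i ≠ j → g i * g j = -(g j * g i)) (j : κ) :
    ∀ l : List κ, g j * (l.map g).prod
      = ((-1 : ℝ) ^ (l.countP (· ≠ j))) • ((l.map g).prod * g j) := by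
  intro l
  induction l with
  | nil => simp
  | cons i l ih =>
    rw [List.map_cons, List.prod_cons]
    by_cases hij : i = j
    · subst hij
      have hcount : ((i :: l).countP (· ≠ i)) = l.countP (· ≠ i) := by
        simp [List.countP_cons]
      rw [hcount]
      conv_lhs => rw [ih]
      rw [mul_smul_comm, mul_assoc]
    · have hji : j ≠ i := fun h => hij h.symm
      have hcount : ((i :: l).countP (· ≠ j)) = l.countP (· ≠ j) + 1 := by
        simp [List.countP_cons, hij]
      rw [hcount, ← mul_assoc, hg j i hji, neg_mul, mul_assoc, ih, mul_smul_comm,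
        pow_succ]
      simp [mul_neg_one, neg_smul, mul_assoc]

lemma mySwapNotMem (g : κ → A)
    (hg : ∀ i j, i ≠ j → g i * g j = -(g j * g i)) (j : κ)
    (l : List κ) (hj : j ∉ l) :
    (l.map g).prod * g j = ((-1 : ℝ) ^ l.length) • (g j * (l.map g).prod) := by
  have hcnt : l.countP (· ≠ j) = l.length := by
    rw [List.countP_eq_length]
    intro a ha
    simp only [decide_eq_true_eq]
    exact fun h => hj (h ▸ ha)
  have := mySwap g hg j l
  rw [hcnt] at this
  rw [this, smul_smul, ← pow_add, ← two_mul, pow_mul]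
  norm_num

lemma mySq (g : κ → A) (q : κ → ℝ)
    (hg : ∀ i j, i ≠ j → g i * g j = -(g j * g i))
    (hq : ∀ i, g i * g i = algebraMap ℝ A (q i)) :
    ∀ l : List κ, l.Nodup →
      (l.map g).prod * (l.map g).prod
        = algebraMap ℝ A (((-1 : ℝ) ^ (l.length.choose 2)) * (l.map q).prod) := by
  intro l
  induction l with
  | nil => simp
  | cons i l ih =>
    intro hnd
    rw [List.nodup_cons] at hnd
    obtain ⟨hmem, hnd⟩ := hnd
    rw [List.map_cons, List.prod_cons]
    have key : (List.map g l).prod * g i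
        = ((-1 : ℝ) ^ l.length) • (g i * (List.map g l).prod) :=
      mySwapNotMem g hg i l hmem
    calc g i * (List.map g l).prod * (g i * (List.map g l).prod)
        = g i * ((List.map g l).prod * g i) * (List.map g l).prod := by
          simp [mul_assoc]
      _ = ((-1 : ℝ) ^ l.length) • ((g i * g i) * ((List.map g l).prod * (List.map g l).prod)) := by
          rw [key, mul_smul_comm, smul_mul_assoc]
          simp [mul_assoc]
      _ = ((-1 : ℝ) ^ l.length) • (algebraMap ℝ A (q i)
            * algebraMap ℝ A (((-1 : ℝ) ^ (l.length.choose 2)) * (l.map q).prod)) := by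
          rw [hq, ih hnd]
      _ = algebraMap ℝ A (((-1 : ℝ) ^ ((i :: l).length.choose 2)) * ((i :: l).map q).prod) := by
          rw [← map_mul, Algebra.smul_def, ← map_mul]
          congr 1
          rw [List.map_cons, List.prod_cons, List.length_cons,
            Nat.choose_succ_succ, Nat.choose_one_right, pow_add]
          ring

lemma myProdMul (c : A) (g : κ → A) (hcg : ∀ i, g i * c = -(c * g i)) :
    ∀ l : List κ, (l.map fun i => c * g i).prod
      = ((-1 : ℝ) ^ (l.length.choose 2)) • (c ^ l.length * (l.map g).prod) := by
  intro l
  induction l with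
  | nil => simp
  | cons i l ih =>
    rw [List.map_cons, List.prod_cons, ih, mul_smul_comm, List.map_cons, List.prod_cons]
    rw [show c * g i * (c ^ l.length * (List.map g l).prod)
        = c * (g i * c ^ l.length) * (List.map g l).prod by simp [mul_assoc]]
    rw [myPowAnticomm c (g i) (hcg i) l.length, mul_smul_comm, smul_mul_assoc, smul_smul]
    rw [List.length_cons, Nat.choose_succ_succ, Nat.choose_one_right, pow_add, pow_succ']
    congr 1
    · ring
    · simp [mul_assoc]

lemma myProdSmul (t : ℝ) (f : κ → A) :
    ∀ l : List κ, (l.map fun i => t • f i).prod = t ^ l.length • (l.map f).prod := by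
  intro l
  induction l with
  | nil => simp
  | cons i l ih =>
    rw [List.map_cons, List.prod_cons, ih, List.map_cons, List.prod_cons,
      smul_mul_assoc, mul_smul_comm, smul_smul, List.length_cons, pow_succ']

end Helpers

/-- Let `(V,h)` be a real nondegenerate quadratic space of even dimension
with `ν² = σ ∈ {±1}`.  There exists a unital ℝ-algebra isomorphism
`φ₀ : Cl(V,h) → Cl(V,-σh)` determined by `v ↦ ν v` on `V`, and the induced group
isomorphism between the Clifford groups intertwines the twisted vector representation of
`G(V,h)` with the untwisted vector representation of `G(V,-σh)`: for every `a ∈ G(V,h)`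
(a homogeneous unit with `Ad(a)(V) = V`) and `v, w ∈ V`, if `π(a) v a⁻¹ = w` in `Cl(V,h)`
then `φ₀(a) v φ₀(a)⁻¹ = w` in `Cl(V,-σh)`. -/
theorem clifford_iso_twisted_untwisted
    {V : Type*} [AddCommGroup V] [Module ℝ V] (Q : QuadraticForm ℝ V)
    (d : ℕ) (hd : Even d) (hd0 : 0 < d) (b : Module.Basis (Fin d) ℝ V)
    (hQ : ∀ i, Q (b i) = 1 ∨ Q (b i) = -1)
    (horth : ∀ i j, i ≠ j → QuadraticMap.polar Q (b i) (b j) = 0)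
    (ν : CliffordAlgebra Q) (hν : ν = (List.ofFn fun i => ι Q (b i)).prod)
    (σ : ℝ) (hσ1 : σ = 1 ∨ σ = -1)
    (hσ : ν * ν = algebraMap ℝ (CliffordAlgebra Q) σ) :
    ∃ φ₀ : CliffordAlgebra Q ≃ₐ[ℝ] CliffordAlgebra ((-σ) • Q),
      (∀ v : V, φ₀ (ν * ι Q v) = ι ((-σ) • Q) v) ∧
      (∀ a : (CliffordAlgebra Q)ˣ,
        ((a : CliffordAlgebra Q) ∈ evenOdd Q 0 ∨ (a : CliffordAlgebra Q) ∈ evenOdd Q 1) →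
        (∀ v : V, ∃ w : V, (a : CliffordAlgebra Q) * ι Q v * ↑a⁻¹ = ι Q w) →
        ∀ v w : V,
          involute (a : CliffordAlgebra Q) * ι Q v * ↑a⁻¹ = ι Q w →
            φ₀ ↑a * ι ((-σ) • Q) v * φ₀ ↑a⁻¹ = ι ((-σ) • Q) w) := by
  obtain ⟨r, hr⟩ := hd
  have hσσ : σ * σ = 1 := by rcases hσ1 with h | h <;> rw [h] <;> norm_num
  set Q' : QuadraticForm ℝ V := (-σ) • Q with hQ'
  have hQ'app : ∀ v : V, Q' v = -σ * Q v := fun v => by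
    rw [hQ', QuadraticMap.smul_apply, smul_eq_mul]
  have hpolar' : ∀ i j, i ≠ j → QuadraticMap.polar Q' (b i) (b j) = 0 := by
    intro i j hij
    have : ⇑Q' = (-σ) • ⇑Q := by
      funext v; rw [hQ'app]; simp
    rw [show QuadraticMap.polar ⇑Q' = QuadraticMap.polar ((-σ) • ⇑Q) by rw [this],
      QuadraticMap.polar_smul, horth i j hij]
    simp
  -- generators
  set g : Fin d → CliffordAlgebra Q := fun i => ι Q (b i) with hg
  set g' : Fin d → CliffordAlgebra Q' := fun i => ι Q' (b i) with hg'
  have hganti : ∀ i j, i ≠ j → g i * g j = -(g j * g i) := by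
    intro i j hij
    have h1 := ι_mul_ι_add_swap (Q := Q) (b i) (b j)
    rw [horth i j hij, map_zero] at h1
    linear_combination (norm := noncomm_ring) h1
  have hg'anti : ∀ i j, i ≠ j → g' i * g' j = -(g' j * g' i) := by
    intro i j hij
    have h1 := ι_mul_ι_add_swap (Q := Q') (b i) (b j)
    rw [hpolar' i j hij, map_zero] at h1
    linear_combination (norm := noncomm_ring) h1
  have hgsq : ∀ i, g i * g i = algebraMap ℝ _ (Q (b i)) := fun i => ι_sq_scalar Q (b i)
  have hg'sq : ∀ i, g' i * g' i = algebraMap ℝ _ (Q' (b i)) := fun i => ι_sq_scalar Q' (b i)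
  have hνl : ν = ((List.finRange d).map g).prod := by
    rw [hν, List.ofFn_eq_map]
  set ν' : CliffordAlgebra Q' := ((List.finRange d).map g').prod with hν'l
  -- countP computation
  have hcnt : ∀ j : Fin d, (List.finRange d).countP (· ≠ j) = d - 1 := by
    intro j
    have h1 : (List.finRange d).length
        = (List.finRange d).countP (· ≠ j) + (List.finRange d).countP (· = j) := by
      have := List.length_eq_countP_add_countP (l := List.finRange d)
        (p := fun i => decide (i ≠ j))
      simpa [decide_not] using this
    have h2 : (List.finRange d).countP (· = j) = 1 := by
      have hc := List.count_eq_one_of_mem (List.nodup_finRange d) (List.mem_finRange j)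
      simpa [List.count, BEq.beq] using hc
    rw [List.length_finRange] at h1
    omega
  have hodd : Odd (d - 1) := Nat.Even.sub_odd hd0 ⟨r, hr⟩ odd_one
  -- anticommutation of ν with vectors
  have hbanti : ∀ j : Fin d, g j * ν = -(ν * g j) := by
    intro j
    have := mySwap g hganti j (List.finRange d)
    rw [hcnt j, Odd.neg_one_pow hodd, ← hνl] at this
    rw [this, neg_smul, one_smul]
  have hb'anti : ∀ j : Fin d, g' j * ν' = -(ν' * g' j) := by
    intro j
    have := mySwap g' hg'anti j (List.finRange d)
    rw [hcnt j, Odd.neg_one_pow hodd, ← hν'l] at this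
    rw [this, neg_smul, one_smul]
  have hνanti : ∀ v : V, ι Q v * ν = -(ν * ι Q v) := by
    intro v
    have hlin : ((LinearMap.mulRight ℝ ν).comp (ι Q) + (LinearMap.mulLeft ℝ ν).comp (ι Q))
        = (0 : V →ₗ[ℝ] CliffordAlgebra Q) := by
      apply b.ext
      intro i
      simp only [LinearMap.add_apply, LinearMap.comp_apply, LinearMap.mulRight_apply,
        LinearMap.mulLeft_apply, LinearMap.zero_apply]
      have := hbanti i
      rw [hg] at this
      rw [this]
      simp
    have := LinearMap.congr_fun hlin v
    simp only [LinearMap.add_apply, LinearMap.comp_apply, LinearMap.mulRight_apply,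
      LinearMap.mulLeft_apply, LinearMap.zero_apply] at this
    exact eq_neg_of_add_eq_zero_left this
  have hν'anti : ∀ v : V, ι Q' v * ν' = -(ν' * ι Q' v) := by
    intro v
    have hlin : ((LinearMap.mulRight ℝ ν').comp (ι Q') + (LinearMap.mulLeft ℝ ν').comp (ι Q'))
        = (0 : V →ₗ[ℝ] CliffordAlgebra Q') := by
      apply b.ext
      intro i
      simp only [LinearMap.add_apply, LinearMap.comp_apply, LinearMap.mulRight_apply,
        LinearMap.mulLeft_apply, LinearMap.zero_apply]
      have := hb'anti i
      rw [hg'] at this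
      rw [this]
      simp
    have := LinearMap.congr_fun hlin v
    simp only [LinearMap.add_apply, LinearMap.comp_apply, LinearMap.mulRight_apply,
      LinearMap.mulLeft_apply, LinearMap.zero_apply] at this
    exact eq_neg_of_add_eq_zero_left this
  -- scalar identity from hσ
  haveI : Nontrivial (CliffordAlgebra Q) := (CliffordAlgebra.equivExterior Q).toEquiv.nontrivial
  have hinj : Function.Injective (algebraMap ℝ (CliffordAlgebra Q)) :=
    (algebraMap ℝ (CliffordAlgebra Q)).injective
  set Pl : ℝ := ((List.finRange d).map fun i => Q (b i)).prod with hPl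
  have hsq := mySq g (fun i => Q (b i)) hganti hgsq (List.finRange d) (List.nodup_finRange d)
  rw [← hνl, List.length_finRange] at hsq
  have hscal : (-1 : ℝ) ^ (d.choose 2) * Pl = σ := by
    apply hinj
    rw [← hsq, hσ]
  have hPl' : ((List.finRange d).map fun i => Q' (b i)).prod = Pl := by
    have h1 : ((List.finRange d).map fun i => Q' (b i))
        = ((List.finRange d).map fun i => -σ * Q (b i)) := by
      simp [hQ'app]
    rw [h1, List.prod_map_mul]
    have h2 : ((List.finRange d).map fun _ => -σ).prod = (-σ) ^ d := by
      simp [List.map_const', List.prod_replicate]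
    rw [h2]
    have h3 : (-σ) ^ d = 1 := by
      rw [hr, pow_add, ← mul_pow, neg_mul_neg, hσσ, one_pow]
    rw [h3, one_mul, hPl]
  have hν'sq : ν' * ν' = algebraMap ℝ (CliffordAlgebra Q') σ := by
    have hsq' := mySq g' (fun i => Q' (b i)) hg'anti hg'sq (List.finRange d)
      (List.nodup_finRange d)
    rw [← hν'l, List.length_finRange, hPl', hscal] at hsq'
    exact hsq'
  -- the scalars
  set u : ℝ := (-1 : ℝ) ^ (d.choose 2) * σ ^ r with hu
  set t : ℝ := u * σ with ht
  have hu2 : u * u = 1 := by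
    have h1 : ((-1 : ℝ)) ^ (d.choose 2) * ((-1 : ℝ)) ^ (d.choose 2) = 1 := by
      rw [← mul_pow]; norm_num
    have h2 : (σ : ℝ) ^ r * σ ^ r = 1 := by rw [← mul_pow, hσσ, one_pow]
    calc u * u = (((-1 : ℝ)) ^ (d.choose 2) * ((-1 : ℝ)) ^ (d.choose 2)) * (σ ^ r * σ ^ r) := by
          rw [hu]; ring
      _ = 1 := by rw [h1, h2, one_mul]
  have ht2 : t * t = 1 := by
    calc t * t = (u * u) * (σ * σ) := by rw [ht]; ring
      _ = 1 := by rw [hu2, hσσ, one_mul]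
  have ht0 : t ≠ 0 := fun h => by rw [h, zero_mul] at ht2; exact zero_ne_one ht2
  -- the algebra hom ψ : Cl(Q') → Cl(Q)
  set ψ : CliffordAlgebra Q' →ₐ[ℝ] CliffordAlgebra Q :=
    CliffordAlgebra.lift Q' ⟨(LinearMap.mulLeft ℝ ν).comp (ι Q), by
      intro v
      simp only [LinearMap.comp_apply, LinearMap.mulLeft_apply]
      calc ν * ι Q v * (ν * ι Q v) = ν * (ι Q v * ν) * ι Q v := by
            simp [mul_assoc]
        _ = ν * -(ν * ι Q v) * ι Q v := by rw [hνanti]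
        _ = -(ν * ν * (ι Q v * ι Q v)) := by simp [mul_assoc]
        _ = algebraMap ℝ (CliffordAlgebra Q) (Q' v) := by
            rw [hσ, ι_sq_scalar, ← map_mul, ← map_neg]
            congr 1
            rw [hQ'app]; ring⟩ with hψ
  have hψι : ∀ v : V, ψ (ι Q' v) = ν * ι Q v := by
    intro v
    rw [hψ, CliffordAlgebra.lift_ι_apply]
    simp
  -- the algebra hom χ : Cl(Q) → Cl(Q')
  set χ : CliffordAlgebra Q →ₐ[ℝ] CliffordAlgebra Q' :=
    CliffordAlgebra.lift Q ⟨t • ((LinearMap.mulLeft ℝ ν').comp (ι Q')), by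
      intro v
      simp only [LinearMap.smul_apply, LinearMap.comp_apply, LinearMap.mulLeft_apply]
      rw [smul_mul_assoc, mul_smul_comm, smul_smul, ht2]
      calc (1 : ℝ) • (ν' * ι Q' v * (ν' * ι Q' v)) = ν' * (ι Q' v * ν') * ι Q' v := by
            rw [one_smul]; simp [mul_assoc]
        _ = ν' * -(ν' * ι Q' v) * ι Q' v := by rw [hν'anti]
        _ = -(ν' * ν' * (ι Q' v * ι Q' v)) := by simp [mul_assoc]
        _ = algebraMap ℝ (CliffordAlgebra Q') (Q v) := by
            rw [hν'sq, ι_sq_scalar, ← map_mul, ← map_neg]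
            congr 1
            rw [hQ'app]
            linear_combination (Q v) * hσσ⟩ with hχ
  have hχι : ∀ v : V, χ (ι Q v) = t • (ν' * ι Q' v) := by
    intro v
    rw [hχ, CliffordAlgebra.lift_ι_apply]
    simp
  -- powers of ν, ν'
  have hνd : ν ^ d = algebraMap ℝ (CliffordAlgebra Q) (σ ^ r) := by
    rw [hr, pow_add, ← (Commute.refl ν).mul_pow, hσ, ← map_pow]
  have hν'd : ν' ^ d = algebraMap ℝ (CliffordAlgebra Q') (σ ^ r) := by
    rw [hr, pow_add, ← (Commute.refl ν').mul_pow, hν'sq, ← map_pow]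
  have htd : t ^ d = 1 := by
    rw [hr, pow_add, ← mul_pow, ht2, one_pow]
  -- images of the volume elements
  have hχν : χ ν = algebraMap ℝ (CliffordAlgebra Q') u * ν' := by
    rw [hνl, map_list_prod, List.map_map]
    have h1 : (χ ∘ g) = fun i => t • (ν' * g' i) := by
      funext i
      rw [Function.comp_apply, hg, hg']
      exact hχι (b i)
    rw [h1, myProdSmul t (fun i => ν' * g' i) (List.finRange d)]
    rw [show (List.map (fun i => ν' * g' i) (List.finRange d))
        = ((List.finRange d).map fun i => ν' * g' i) from rfl]
    rw [myProdMul ν' g' (fun i => hb'anti i) (List.finRange d), List.length_finRange,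
      htd, one_smul, ← hν'l, hν'd, Algebra.smul_def, ← mul_assoc, ← map_mul, hu]
  have hψν' : ψ ν' = algebraMap ℝ (CliffordAlgebra Q) u * ν := by
    rw [hν'l, map_list_prod, List.map_map]
    have h1 : (ψ ∘ g') = fun i => ν * g i := by
      funext i
      rw [Function.comp_apply, hg, hg']
      exact hψι (b i)
    rw [h1]
    rw [show (List.map (fun i => ν * g i) (List.finRange d))
        = ((List.finRange d).map fun i => ν * g i) from rfl]
    rw [myProdMul ν g (fun i => hbanti i) (List.finRange d), List.length_finRange,
      ← hνl, hνd, Algebra.smul_def, ← mul_assoc, ← map_mul, hu]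
  -- χ sends ν * v to v
  have hχνι : ∀ v : V, χ (ν * ι Q v) = ι Q' v := by
    intro v
    rw [map_mul, hχν, hχι, mul_smul_comm, mul_assoc, ← mul_assoc ν', hν'sq,
      ← mul_assoc, ← map_mul, ← Algebra.smul_def, smul_smul]
    rw [show t * (u * σ) = t * t from by rw [← ht], ht2, one_smul]
  -- the compositions are the identity
  have hcomp1 : ψ.comp χ = AlgHom.id ℝ (CliffordAlgebra Q) := by
    apply CliffordAlgebra.hom_ext
    apply LinearMap.ext
    intro v
    simp only [LinearMap.comp_apply, AlgHom.toLinearMap_apply, AlgHom.comp_apply,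
      AlgHom.coe_id, id_eq]
    rw [hχι, map_smul, map_mul, hψν', hψι, mul_assoc, ← mul_assoc ν, hσ,
      ← mul_assoc, ← map_mul, ← Algebra.smul_def, smul_smul]
    rw [show t * (u * σ) = t * t from by rw [← ht], ht2, one_smul]
  have hcomp2 : χ.comp ψ = AlgHom.id ℝ (CliffordAlgebra Q') := by
    apply CliffordAlgebra.hom_ext
    apply LinearMap.ext
    intro v
    simp only [LinearMap.comp_apply, AlgHom.toLinearMap_apply, AlgHom.comp_apply,
      AlgHom.coe_id, id_eq]
    rw [hψι, hχνι]
  -- the algebra isomorphism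
  set φ : CliffordAlgebra Q ≃ₐ[ℝ] CliffordAlgebra Q' :=
    AlgEquiv.ofAlgHom χ ψ hcomp2 hcomp1 with hφ
  have hφapp : ∀ x : CliffordAlgebra Q, φ x = χ x := fun x => rfl
  -- the intertwining relation with involute
  have hinvol : ∀ x : CliffordAlgebra Q, φ (involute x) * ν' = ν' * φ x := by
    intro x
    induction x using CliffordAlgebra.induction with
    | algebraMap s =>
      simp [Algebra.commutes]
    | ι v =>
      rw [involute_ι, map_neg, hφapp, hχι, neg_mul, smul_mul_assoc, mul_assoc,
        hν'anti v, mul_neg, smul_neg, neg_neg, mul_smul_comm]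
    | mul x y hx hy =>
      rw [map_mul, map_mul, map_mul, mul_assoc, hy, ← mul_assoc, hx, mul_assoc]
    | add x y hx hy =>
      rw [map_add, map_add, map_add, add_mul, mul_add, hx, hy]
  refine ⟨φ, fun v => by rw [hφapp]; exact hχνι v, ?_⟩
  intro a _ _ v w hvw
  have h1 : φ (involute ↑a) * φ (ι Q v) * φ (↑(a⁻¹)) = φ (ι Q w) := by
    rw [← map_mul, ← map_mul, hvw]
  have hφι : ∀ v : V, φ (ι Q v) = t • (ν' * ι Q' v) := fun v => by
    rw [hφapp]; exact hχι v
  rw [hφι, hφι] at h1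
  have h2 : φ (involute ↑a) * (t • (ν' * ι Q' v)) * φ (↑(a⁻¹))
      = t • (ν' * (φ ↑a * ι Q' v * φ ↑(a⁻¹))) := by
    rw [mul_smul_comm, smul_mul_assoc]
    congr 1
    rw [← mul_assoc, ← mul_assoc, hinvol ↑a]
    simp [mul_assoc]
  rw [h2] at h1
  have h3 : ν' * (φ ↑a * ι Q' v * φ ↑(a⁻¹)) = ν' * ι Q' w :=
    smul_right_injective (CliffordAlgebra Q') ht0 h1
  have h4 : ∀ z : CliffordAlgebra Q', algebraMap ℝ (CliffordAlgebra Q') σ * (ν' * (ν' * z)) = z := by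
    intro z
    rw [← mul_assoc ν', hν'sq, ← mul_assoc, ← map_mul, hσσ, map_one, one_mul]
  calc φ ↑a * ι Q' v * φ ↑(a⁻¹)
      = algebraMap ℝ (CliffordAlgebra Q') σ * (ν' * (ν' * (φ ↑a * ι Q' v * φ ↑(a⁻¹)))) := by
        rw [h4]
    _ = algebraMap ℝ (CliffordAlgebra Q') σ * (ν' * (ν' * ι Q' w)) := by rw [h3]
    _ = ι Q' w := h4 _
end

section
/- Let γ : Cl(V,h) → End_ℝ(S) be an irreducible real Clifford representation in the non-simple case p-q ≡ 1 or 5 (mod 8) (so γ(ν) = ε·id_S with ε = ±1). Then the anticommutant subspace A(γ) = {x ∈ End_ℝ(S) : x γ(v) = -γ(v) x for all v ∈ V} is zero. -/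
open CliffordAlgebra

/-- Let `γ : Cl(V,h) → End_ℝ(S)` be an irreducible real Clifford
representation in the non-simple case `p-q ≡ 1` or `5 (mod 8)` (so the volume element
satisfies `γ(ν) = ε·id_S` with `ε = ±1`).  Then the anticommutant subspace
`A(γ) = {x ∈ End_ℝ(S) : x γ(v) = -γ(v) x for all v ∈ V}` is zero. -/
theorem anticommutant_zero_nonsimple
    {V S : Type*} [AddCommGroup V] [Module ℝ V]
    [AddCommGroup S] [Module ℝ S] [FiniteDimensional ℝ S] [Nontrivial S]
    (Q : QuadraticForm ℝ V)
    (p q d : ℕ) (hd : d = p + q) (hd0 : 0 < d) (b : Module.Basis (Fin d) ℝ V)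
    (hQ : ∀ i, Q (b i) = 1 ∨ Q (b i) = -1)
    (horth : ∀ i j, i ≠ j → QuadraticMap.polar Q (b i) (b j) = 0)
    (hp : (Finset.univ.filter fun i => Q (b i) = 1).card = p)
    (hq : (Finset.univ.filter fun i => Q (b i) = -1).card = q)
    (hpq : (((p : ℤ) - q) % 8 = 1 ∨ ((p : ℤ) - q) % 8 = 5))
    (γ : CliffordAlgebra Q →ₐ[ℝ] Module.End ℝ S)
    (hirr : ∀ U : Submodule ℝ S,
      (∀ (x : CliffordAlgebra Q), ∀ u ∈ U, γ x u ∈ U) → U = ⊥ ∨ U = ⊤)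
    (ε : ℝ) (hε : ε = 1 ∨ ε = -1)
    (hvol : γ ((List.ofFn fun i => ι Q (b i)).prod) = ε • 1) :
    ∀ x : Module.End ℝ S,
      (∀ v : V, x * γ (ι Q v) = -(γ (ι Q v) * x)) → x = 0 := by
  intro x hx
  -- key: x anticommutes with a product of `n` generators up to sign `(-1)^n`
  have key : ∀ l : List V,
      x * γ ((l.map (ι Q)).prod) = ((-1 : ℝ) ^ l.length) • (γ ((l.map (ι Q)).prod) * x) := by
    intro l
    induction l with
    | nil => simp
    | cons v t ih =>
        simp only [List.map_cons, List.prod_cons, List.length_cons, map_mul]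
        calc x * (γ (ι Q v) * γ ((t.map (ι Q)).prod))
            = (x * γ (ι Q v)) * γ ((t.map (ι Q)).prod) := by rw [mul_assoc]
          _ = (-(γ (ι Q v) * x)) * γ ((t.map (ι Q)).prod) := by rw [hx v]
          _ = -(γ (ι Q v) * (x * γ ((t.map (ι Q)).prod))) := by rw [neg_mul, mul_assoc]
          _ = -(γ (ι Q v) * (((-1 : ℝ) ^ t.length) • (γ ((t.map (ι Q)).prod) * x))) := by
              rw [ih]
          _ = ((-1 : ℝ) ^ (t.length + 1)) • (γ (ι Q v) * γ ((t.map (ι Q)).prod) * x) := by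
              rw [pow_succ]
              simp [mul_smul_comm, smul_smul, mul_comm, mul_assoc]
  have hlist : (List.ofFn fun i => ι Q (b i)) = (List.ofFn fun i => b i).map (ι Q) := by
    simp [List.map_ofFn]; rfl
  have hodd : d % 2 = 1 := by omega
  have hx2 := key (List.ofFn fun i => b i)
  rw [← hlist, hvol] at hx2
  have hsign : ((-1 : ℝ) ^ (List.ofFn fun i => b i).length) = -1 := by
    rw [List.length_ofFn]
    exact Odd.neg_one_pow (Nat.odd_iff.2 hodd)
  rw [hsign] at hx2
  -- hx2 : x * (ε • 1) = (-1) • ((ε • 1) * x)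
  have hε0 : (ε : ℝ) ≠ 0 := by rcases hε with h | h <;> rw [h] <;> norm_num
  have : ε • x = -(ε • x) := by
    have h1 : x * (ε • 1) = ε • x := by simp [mul_smul_comm]
    have h2 : (ε • (1 : Module.End ℝ S)) * x = ε • x := by simp [smul_mul_assoc]
    rw [h1, h2] at hx2
    simpa using hx2
  have hsum : ε • x + ε • x = 0 := by
    nth_rewrite 2 [this]
    exact add_neg_cancel _
  have h0 : (2 * ε) • x = 0 := by
    rw [two_mul, add_smul]; exact hsum
  have h2 : (2 * ε) ≠ 0 := mul_ne_zero two_ne_zero hε0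
  rcases smul_eq_zero.mp h0 with h | h
  · exact absurd h h2
  · exact h
end
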